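/- Let A, (·,·), Q, I, {·,·} be as above. For any homogeneous H ∈ A, the element F := (-1)^{|H|} QH is Q-closed, and the Hamiltonian derivation X = (F,·) satisfies, for all G ∈ A: (F,G) - {H,G} ∈ I. In other words, the antibracket-Hamiltonian vector field of (-1)^{|H|}QH restricts on the zero locus of Q to the Poisson-Hamiltonian vector field of H. -/

import Mathlib

theorem stmt_8 {k A : Type*} [Field k] [CharZero k] [Ring A] [Algebra k A]
    (H : ZMod 2 → A → Prop)
    (br : A → A → A)
    (hbr_addl : ∀ F G X : A, br (F + G) X = br F X + br G X)
    (hbr_addr : ∀ F G X : A, br X (F + G) = br X F + br X G)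
    (hsupercomm : ∀ (p q : ZMod 2) (F G : A), H p F → H q G →
      F * G = (-1 : A) ^ (p * q).val * (G * F))
    (hbr_grade : ∀ (p q : ZMod 2) (F G : A), H p F → H q G → H (p + q + 1) (br F G))
    (hanti : ∀ (p q : ZMod 2) (F G : A), H p F → H q G →
      br F G = -((-1 : A) ^ ((p + 1) * (q + 1)).val * br G F))
    (hleib : ∀ (p q : ZMod 2) (F G X : A), H p F → H q G →
      br F (G * X) = br F G * X + (-1 : A) ^ (q * (p + 1)).val * (G * br F X))
    (hjac : ∀ (p q r : ZMod 2) (F G X : A), H p F → H q G → H r X →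
      (-1 : A) ^ ((p + 1) * (r + 1)).val * br F (br G X)
        + (-1 : A) ^ ((q + 1) * (p + 1)).val * br G (br X F)
        + (-1 : A) ^ ((r + 1) * (q + 1)).val * br X (br F G) = 0)
    (Q : A → A)
    (hQadd : ∀ F G : A, Q (F + G) = Q F + Q G)
    (hQodd : ∀ (p : ZMod 2) (F : A), H p F → H (p + 1) (Q F))
    (hQder : ∀ (p : ZMod 2) (F G : A), H p F →
      Q (F * G) = Q F * G + (-1 : A) ^ p.val * (F * Q G))
    (hQbr : ∀ (p : ZMod 2) (F G : A), H p F →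
      Q (br F G) = br (Q F) G + (-1 : A) ^ ((p + 1 : ZMod 2)).val * br F (Q G))
    (hQQ : ∀ F : A, Q (Q F) = 0)
    :
    ∀ (p : ZMod 2) (Ham : A), H p Ham →
      Q ((-1 : A) ^ p.val * Q Ham) = 0
      ∧ ∀ G : A, br ((-1 : A) ^ p.val * Q Ham) G - br Ham (Q G)
          ∈ Ideal.span (Set.range Q) := by
  intro p Ham hH
  have hQ0 : Q 0 = 0 := by
    have h := hQadd 0 0
    rw [add_zero] at h
    exact (left_eq_add.mp h)
  have hQneg : ∀ x : A, Q (-x) = -Q x := by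
    intro x
    have h := hQadd x (-x)
    rw [add_neg_cancel, hQ0] at h
    exact (neg_eq_of_add_eq_zero_right h.symm).symm
  have hbrneg : ∀ x y : A, br (-x) y = -br x y := by
    intro x y
    have h0 : br 0 y = 0 := by
      have h := hbr_addl 0 0 y
      rw [add_zero] at h
      exact (left_eq_add.mp h)
    have h := hbr_addl x (-x) y
    rw [add_neg_cancel, h0] at h
    exact (neg_eq_of_add_eq_zero_right h.symm).symm
  have hp : p = 0 ∨ p = 1 := by fin_cases p; exacts [Or.inl rfl, Or.inr rfl]
  rcases hp with hp | hp <;> subst hp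
  · refine ⟨by simpa using hQQ Ham, fun G => ?_⟩
    have hkey := hQbr 0 Ham G hH
    have hv : ((0 + 1 : ZMod 2)).val = 1 := by decide
    rw [hv, pow_one] at hkey
    have heq : br ((-1 : A) ^ (0 : ZMod 2).val * Q Ham) G - br Ham (Q G)
        = Q (br Ham G) := by
      have hv0 : ((0 : ZMod 2)).val = 0 := by decide
      rw [hv0, pow_zero, one_mul, hkey, neg_one_mul, sub_eq_add_neg]
    rw [heq]
    exact Ideal.subset_span ⟨br Ham G, rfl⟩
  · have hv1 : ((1 : ZMod 2)).val = 1 := by decide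
    refine ⟨by rw [hv1, pow_one, neg_one_mul, hQneg, hQQ, neg_zero], fun G => ?_⟩
    have hkey := hQbr 1 Ham G hH
    have hv : ((1 + 1 : ZMod 2)).val = 0 := by decide
    rw [hv, pow_zero, one_mul] at hkey
    have heq : br ((-1 : A) ^ (1 : ZMod 2).val * Q Ham) G - br Ham (Q G)
        = -Q (br Ham G) := by
      rw [hv1, pow_one, neg_one_mul, hbrneg, hkey, neg_add, sub_eq_add_neg]
    rw [heq]
    exact neg_mem (Ideal.subset_span ⟨br Ham G, rfl⟩)
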